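/- The sequence heuristic and time-step heuristic always produce a valid flow diagram: if at every round the heuristic retains at least one vertex of the current frontier that has an outgoing edge (and such an edge always exists when the criteria cover every single state), then the greedy path reaches v_t after at most m·n + 1 steps, and the corresponding flow diagram correctly represents a segmentation of every input state sequence. -/
import Mathlib


/-- A valid flow diagram (interior nodes in topological order) representing a joint
segmentation of all `m` state sequences of length `n`: `pos l i` is the prefix of
sequence `i` consumed after the first `l` nodes, every sequence is fully segmented
(`pos N i = n`), each node advances at least one sequence, and the segments of each
node jointly fulfil its criterion. -/
structure ValidFD (m n k : ℕ)
    (Ful : Fin k → (Fin m → ℕ) → (Fin m → ℕ) → Prop) where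
  N : ℕ
  crit : ∀ l : ℕ, l < N → Fin k
  uses : ℕ → Fin m → Prop
  pos : ℕ → Fin m → ℕ
  pos_zero : ∀ i, pos 0 i = 0
  pos_le : ∀ l ≤ N, ∀ i, pos l i ≤ n
  pos_last : ∀ i, pos N i = n
  mono : ∀ l < N, ∀ i, pos l i ≤ pos (l + 1) i
  stay : ∀ l < N, ∀ i, ¬ uses l i → pos (l + 1) i = pos l i
  advance : ∀ l < N, ∀ i, uses l i → pos l i < pos (l + 1) i
  node_nonempty : ∀ l < N, ∃ i, uses l i
  fulfils : ∀ (l : ℕ) (h : l < N), Ful (crit l h) (pos l) (pos (l + 1))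

/-- the sequence/time-step heuristics always produce a valid flow diagram.
If the greedy selection `g` (the retained frontier vertex at each round) starts at
`v_s = (0,…,0)` and, as long as the current vertex is not `(n,…,n)`, advances along some
prefix-graph edge (which exists whenever the criteria cover every single state), then
it reaches `(n,…,n)` — hence `v_t` — after at most `m·n` rounds (`m·n + 1` path steps),
and the corresponding flow diagram validly represents a segmentation of every input
state sequence. -/
theorem stmt_15 (m n k : ℕ)
    (Ful : Fin k → (Fin m → ℕ) → (Fin m → ℕ) → Prop)
    (g : ℕ → Fin m → ℕ)
    (h0 : g 0 = fun _ => 0)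
    (hstep : ∀ t : ℕ, g t ≠ (fun _ => n) →
      (∀ i, g t i ≤ g (t + 1) i) ∧ g t ≠ g (t + 1) ∧
      (∀ i, g (t + 1) i ≤ n) ∧ ∃ j, Ful j (g t) (g (t + 1))) :
    ∃ T ≤ m * n, g T = (fun _ => n) ∧ T + 1 ≤ m * n + 1 ∧
      ∃ F : ValidFD m n k Ful, F.N = T ∧ ∀ l ≤ T, F.pos l = g l := by

  have hex : ∃ t, t ≤ m * n ∧ g t = (fun _ => n) := by
    by_contra hc
    push_neg at hc
    have key : ∀ t, t ≤ m * n + 1 → (∀ i, g t i ≤ n) ∧ t ≤ ∑ i, g t i := by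
      intro t
      induction t with
      | zero => intro _; simp [h0]
      | succ s ih =>
        intro ht
        have hs : s ≤ m * n := by omega
        have hne := hc s hs
        obtain ⟨hmono, hneq, hle, -⟩ := hstep s hne
        obtain ⟨-, hsum⟩ := ih (by omega)
        refine ⟨hle, ?_⟩
        have hlt : ∑ i, g s i < ∑ i, g (s + 1) i := by
          obtain ⟨i, hi⟩ := Function.ne_iff.mp hneq
          exact Finset.sum_lt_sum (fun i _ => hmono i)
            ⟨i, Finset.mem_univ i, lt_of_le_of_ne (hmono i) hi⟩
        omega
    obtain ⟨hle, hsum⟩ := key (m * n + 1) le_rfl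
    have hub : ∑ i : Fin m, g (m * n + 1) i ≤ ∑ _i : Fin m, n :=
      Finset.sum_le_sum fun i _ => hle i
    have hcn : (∑ _i : Fin m, n) = m * n := by
      simp [Finset.sum_const, mul_comm]
    omega
  obtain ⟨t0, ht0, hg0⟩ := hex
  have hP : ∃ t, g t = (fun _ => n) := ⟨t0, hg0⟩
  set T := Nat.find hP with hTdef
  have hT : g T = (fun _ => n) := Nat.find_spec hP
  have hTle : T ≤ m * n := le_trans (Nat.find_min' hP hg0) ht0
  have hmin : ∀ l, l < T → g l ≠ (fun _ => n) := fun l hl => Nat.find_min hP hl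
  have posle : ∀ l, l ≤ T → ∀ i, g l i ≤ n := by
    intro l hl i
    cases l with
    | zero => rw [h0]; exact Nat.zero_le n
    | succ s => exact (hstep s (hmin s (by omega))).2.2.1 i
  refine ⟨T, hTle, hT, by omega, ⟨{
    N := T
    crit := fun l hl => (hstep l (hmin l hl)).2.2.2.choose
    uses := fun l i => g l i < g (l + 1) i
    pos := g
    pos_zero := fun i => by rw [h0]
    pos_le := posle
    pos_last := fun i => by rw [hT]
    mono := fun l hl i => (hstep l (hmin l hl)).1 i
    stay := fun l hl i h =>
      Nat.le_antisymm (Nat.not_lt.mp h) ((hstep l (hmin l hl)).1 i)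
    advance := fun l hl i h => h
    node_nonempty := fun l hl => by
      obtain ⟨i, hi⟩ := Function.ne_iff.mp (hstep l (hmin l hl)).2.1
      exact ⟨i, lt_of_le_of_ne ((hstep l (hmin l hl)).1 i) hi⟩
    fulfils := fun l hl => (hstep l (hmin l hl)).2.2.2.choose_spec
  }, rfl, fun l _ => rfl⟩⟩
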